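/- Under the same setup (X bounded a.s., ε independent of X with E[ε²] < ∞, C independent of (ε, X), T = exp(X^⊤β⁰ + ε), δ = 1_{T≤C}, Y = min(T,C), G_0(t) = P(C > t) continuous with G_0(T) ≥ ζ_0 > 0 a.s.), the weighted Hessian identity holds, entrywise: E[ (δ / G_0(Y)) · h_τ(ε) · X X^⊤ ] = E[h_τ(ε)] · E[X X^⊤]. -/

import Mathlib

open MeasureTheory ProbabilityTheory

noncomputable section

/-- `h_τ(x) = 2τ 1_{x≥0} + 2(1-τ) 1_{x<0}`. -/
def hExp (τ x : ℝ) : ℝ := if 0 ≤ x then 2 * τ else 2 * (1 - τ)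

lemma hExp_measurable (τ : ℝ) : Measurable (hExp τ) :=
  Measurable.ite (measurableSet_le measurable_const measurable_id)
    measurable_const measurable_const

lemma hExp_abs_le (τ : ℝ) (hτ : τ ∈ Set.Ioo (0 : ℝ) 1) (x : ℝ) : |hExp τ x| ≤ 2 := by
  obtain ⟨h0, h1⟩ := hτ
  unfold hExp
  split_ifs <;> rw [abs_of_nonneg (by linarith)] <;> linarith

/-- Auxiliary: the regression function on the joint space. -/
def phiAux (p : ℕ) (β0 : Fin p → ℝ) (w : ℝ × (Fin p → ℝ)) : ℝ :=
  Real.exp ((∑ i, w.2 i * β0 i) + w.1)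

lemma phiAux_continuous (p : ℕ) (β0 : Fin p → ℝ) : Continuous (phiAux p β0) := by
  unfold phiAux
  exact Real.continuous_exp.comp
    ((continuous_finset_sum _ fun i _ =>
      ((continuous_apply i).comp continuous_snd).mul continuous_const).add continuous_fst)

/-- Auxiliary: the integrand on the joint space. -/
def FAux (p : ℕ) (τ : ℝ) (β0 : Fin p → ℝ) (G0 : ℝ → ℝ) (j k : Fin p)
    (q : (ℝ × (Fin p → ℝ)) × ℝ) : ℝ :=
  (if phiAux p β0 q.1 ≤ q.2 then 1 else 0) / G0 (phiAux p β0 q.1)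
    * hExp τ q.1.1 * q.1.2 j * q.1.2 k

lemma FAux_measurable (p : ℕ) (τ : ℝ) (β0 : Fin p → ℝ) (G0 : ℝ → ℝ)
    (hG0 : Continuous G0) (j k : Fin p) : Measurable (FAux p τ β0 G0 j k) := by
  have hφ : Measurable fun q : (ℝ × (Fin p → ℝ)) × ℝ => phiAux p β0 q.1 :=
    (phiAux_continuous p β0).measurable.comp measurable_fst
  refine ((((Measurable.ite (measurableSet_le hφ measurable_snd) measurable_const
      measurable_const).div (hG0.measurable.comp hφ)).mul
      ((hExp_measurable τ).comp (measurable_fst.comp measurable_fst))).mul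
      ((measurable_pi_apply j).comp (measurable_snd.comp measurable_fst))).mul
      ((measurable_pi_apply k).comp (measurable_snd.comp measurable_fst))

/-- under the AFT setup (`X` a.s. bounded, `ε ⟂ X` with
`E[ε²] < ∞`, `C ⟂ (ε,X)`, `T = exp(X^⊤β⁰ + ε)`, `δ = 1_{T≤C}`, `Y = min(T,C)`,
`G₀(t) = P(C > t)` continuous with `G₀(T) ≥ ζ₀ > 0` a.s.), the weighted Hessian
identity holds entrywise: `E[(δ / G₀(Y)) h_τ(ε) X X^⊤] = E[h_τ(ε)] E[X X^⊤]`. -/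
theorem censored_expectile_hessian_identity
    {Ω : Type*} [MeasurableSpace Ω] (μ : Measure Ω) [IsProbabilityMeasure μ]
    {p : ℕ} (τ : ℝ) (hτ : τ ∈ Set.Ioo (0 : ℝ) 1)
    (X : Ω → Fin p → ℝ) (ε : Ω → ℝ) (C : Ω → ℝ)
    (hXm : Measurable X) (hεm : Measurable ε) (hCm : Measurable C)
    (hXbd : ∃ c : ℝ, ∀ᵐ ω ∂μ, ∀ j, |X ω j| ≤ c)
    (hIndεX : IndepFun ε X μ)
    (hε2 : Integrable (fun ω => ε ω ^ 2) μ)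
    (hIndC : IndepFun C (fun ω => (ε ω, X ω)) μ)
    (β0 : Fin p → ℝ)
    (T : Ω → ℝ) (hT : ∀ ω, T ω = Real.exp ((∑ j, X ω j * β0 j) + ε ω))
    (δ : Ω → ℝ) (hδ : ∀ ω, δ ω = if T ω ≤ C ω then 1 else 0)
    (Y : Ω → ℝ) (hY : ∀ ω, Y ω = min (T ω) (C ω))
    (G0 : ℝ → ℝ) (hG0 : ∀ t, G0 t = (μ {ω | t < C ω}).toReal)
    (hG0cont : Continuous G0)
    (ζ0 : ℝ) (hζ0 : 0 < ζ0) (hG0T : ∀ᵐ ω ∂μ, ζ0 ≤ G0 (T ω)) :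
    ∀ j k,
      (∫ ω, (δ ω / G0 (Y ω)) * hExp τ (ε ω) * X ω j * X ω k ∂μ)
        = (∫ ω, hExp τ (ε ω) ∂μ) * ∫ ω, X ω j * X ω k ∂μ := by
  intro j k
  obtain ⟨c, hXc⟩ := hXbd
  set c' : ℝ := max c 0 with hc'
  have hc'0 : 0 ≤ c' := le_max_right _ _
  set φ : ℝ × (Fin p → ℝ) → ℝ := phiAux p β0 with hφdef
  set F : (ℝ × (Fin p → ℝ)) × ℝ → ℝ := FAux p τ β0 G0 j k with hFdef
  set W : Ω → ℝ × (Fin p → ℝ) := fun ω => (ε ω, X ω) with hWdef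
  have hWm : Measurable W := hεm.prodMk hXm
  have hφm : Measurable φ := (phiAux_continuous p β0).measurable
  have hFm : Measurable F := FAux_measurable p τ β0 G0 hG0cont j k
  have hφW : ∀ ω, φ (W ω) = T ω := fun ω => by
    simp only [hφdef, hWdef, phiAux, hT ω]
  -- the survival function of C with ≤ instead of <
  have claim2 : ∀ t, (μ {ω | t ≤ C ω}).toReal = G0 t := by
    intro t
    have h1 : G0 t ≤ (μ {ω | t ≤ C ω}).toReal := by
      rw [hG0 t]
      refine ENNReal.toReal_mono (measure_ne_top μ _) (measure_mono ?_)
      intro ω h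
      simp only [Set.mem_setOf_eq] at h ⊢
      exact le_of_lt h
    have h2 : (μ {ω | t ≤ C ω}).toReal ≤ G0 t := by
      have htend : Filter.Tendsto G0 (nhdsWithin t (Set.Iio t)) (nhds (G0 t)) :=
        (hG0cont.tendsto t).mono_left nhdsWithin_le_nhds
      refine ge_of_tendsto htend ?_
      filter_upwards [self_mem_nhdsWithin] with s hs
      rw [hG0 s]
      refine ENNReal.toReal_mono (measure_ne_top μ _) (measure_mono ?_)
      intro ω h
      simp only [Set.mem_setOf_eq] at h ⊢
      exact lt_of_lt_of_le hs h
    linarith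
  set μW : Measure (ℝ × (Fin p → ℝ)) := μ.map W with hμWdef
  set μC : Measure ℝ := μ.map C with hμCdef
  have hμWprob : IsProbabilityMeasure μW := Measure.isProbabilityMeasure_map hWm.aemeasurable
  have hμCprob : IsProbabilityMeasure μC := Measure.isProbabilityMeasure_map hCm.aemeasurable
  have hμCIci : ∀ t, (μC (Set.Ici t)).toReal = G0 t := by
    intro t
    rw [hμCdef, Measure.map_apply hCm measurableSet_Ici]
    exact claim2 t
  -- the good set S
  set S : Set (ℝ × (Fin p → ℝ)) := {w | ζ0 ≤ G0 (φ w) ∧ ∀ i, |w.2 i| ≤ c'} with hSdef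
  have hSmeas : MeasurableSet S := by
    have h1 : MeasurableSet {w : ℝ × (Fin p → ℝ) | ζ0 ≤ G0 (φ w)} :=
      measurableSet_le measurable_const (hG0cont.measurable.comp hφm)
    have h2 : MeasurableSet {w : ℝ × (Fin p → ℝ) | ∀ i, |w.2 i| ≤ c'} := by
      have he : {w : ℝ × (Fin p → ℝ) | ∀ i, |w.2 i| ≤ c'} = ⋂ i, {w | |w.2 i| ≤ c'} := by
        ext w; simp
      rw [he]
      refine MeasurableSet.iInter fun i => measurableSet_le ?_ measurable_const
      exact ((measurable_pi_apply i).comp measurable_snd).abs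
    exact h1.inter h2
  have hS_ae : ∀ᵐ w ∂μW, w ∈ S := by
    refine (ae_map_iff hWm.aemeasurable hSmeas).mpr ?_
    filter_upwards [hG0T, hXc] with ω h1 h2
    refine ⟨by rw [hφW ω]; exact h1, fun i => (h2 i).trans (le_max_left _ _)⟩
  -- bound for F on S
  set M : ℝ := 1 / ζ0 * 2 * c' * c' with hMdef
  have hFbound : ∀ q : (ℝ × (Fin p → ℝ)) × ℝ, q.1 ∈ S → ‖F q‖ ≤ M := by
    rintro q ⟨hq1, hq2⟩
    have hGpos : 0 < G0 (φ q.1) := lt_of_lt_of_le hζ0 hq1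
    have hA : |(if φ q.1 ≤ q.2 then (1:ℝ) else 0) / G0 (φ q.1)| ≤ 1 / ζ0 := by
      rw [abs_div, abs_of_pos hGpos]
      refine div_le_div₀ zero_le_one ?_ hζ0 hq1
      split_ifs <;> simp [abs_of_nonneg]
    have hB : |hExp τ q.1.1| ≤ 2 := hExp_abs_le τ hτ _
    have hCj : |q.1.2 j| ≤ c' := hq2 j
    have hCk : |q.1.2 k| ≤ c' := hq2 k
    have : ‖F q‖ = |(if φ q.1 ≤ q.2 then (1:ℝ) else 0) / G0 (φ q.1)|
        * |hExp τ q.1.1| * |q.1.2 j| * |q.1.2 k| := by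
      simp only [hFdef, FAux, Real.norm_eq_abs, abs_mul, hφdef]
    rw [this, hMdef]
    have h0 : (0:ℝ) ≤ 1 / ζ0 := one_div_nonneg.mpr hζ0.le
    exact mul_le_mul (mul_le_mul (mul_le_mul hA hB (abs_nonneg _) h0) hCj (abs_nonneg _)
      (mul_nonneg h0 (by norm_num))) hCk (abs_nonneg _)
      (mul_nonneg (mul_nonneg h0 (by norm_num)) hc'0)
  -- F is integrable on the product measure
  have hS_ae_prod : ∀ᵐ q ∂(μW.prod μC), q.1 ∈ S := by
    rw [ae_iff]
    have hset : {q : (ℝ × (Fin p → ℝ)) × ℝ | ¬ q.1 ∈ S} = Sᶜ ×ˢ Set.univ := by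
      ext q; simp
    rw [hset, Measure.prod_prod]
    have : μW Sᶜ = 0 := by
      rw [← compl_compl S] at hS_ae ⊢
      simpa [ae_iff, Set.compl_def] using hS_ae
    simp [this]
  have hFint : Integrable F (μW.prod μC) := by
    refine Integrable.mono' (integrable_const M) hFm.aestronglyMeasurable ?_
    filter_upwards [hS_ae_prod] with q hq
    exact hFbound q hq
  -- rewrite the LHS integrand
  have hpt : ∀ ω, (δ ω / G0 (Y ω)) * hExp τ (ε ω) * X ω j * X ω k = F (W ω, C ω) := by
    intro ω
    have hφ' : phiAux p β0 (ε ω, X ω) = T ω := by rw [hT ω]; rfl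
    simp only [hFdef, hWdef, FAux, hφ']
    by_cases h : T ω ≤ C ω
    · rw [hδ ω, hY ω, min_eq_left h, if_pos h]
    · rw [hδ ω, if_neg h]
      simp
  -- independence: joint law is product law
  have hprod : μ.map (fun ω => (W ω, C ω)) = μW.prod μC := by
    rw [hμWdef, hμCdef]
    exact (indepFun_iff_map_prod_eq_prod_map_map hWm.aemeasurable hCm.aemeasurable).mp
      hIndC.symm
  -- main computation
  have key : (∫ ω, (δ ω / G0 (Y ω)) * hExp τ (ε ω) * X ω j * X ω k ∂μ)
      = ∫ ω, hExp τ (ε ω) * X ω j * X ω k ∂μ := by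
    have step1 : (∫ ω, (δ ω / G0 (Y ω)) * hExp τ (ε ω) * X ω j * X ω k ∂μ)
        = ∫ q, F q ∂(μW.prod μC) := by
      rw [← hprod, integral_map (hWm.prodMk hCm).aemeasurable hFm.aestronglyMeasurable]
      exact integral_congr_ae (Filter.Eventually.of_forall hpt)
    have hinner : ∀ w : ℝ × (Fin p → ℝ), (∫ c, F (w, c) ∂μC)
        = G0 (φ w) * (1 / G0 (φ w) * hExp τ w.1 * w.2 j * w.2 k) := by
      intro w
      have hind : (fun c => F (w, c))
          = (Set.Ici (φ w)).indicator
              (fun _ => 1 / G0 (φ w) * hExp τ w.1 * w.2 j * w.2 k) := by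
        funext x
        by_cases h : φ w ≤ x <;> simp only [hφdef] at h <;>
          simp [hFdef, FAux, Set.indicator, Set.mem_Ici, h, hφdef]
      rw [hind, integral_indicator_const _ measurableSet_Ici, smul_eq_mul, measureReal_def, hμCIci]
    have step2 : (∫ q, F q ∂(μW.prod μC))
        = ∫ w, hExp τ w.1 * w.2 j * w.2 k ∂μW := by
      rw [integral_prod F hFint]
      refine integral_congr_ae ?_
      filter_upwards [hS_ae] with w hw
      rw [hinner w]
      have hne : G0 (φ w) ≠ 0 := ne_of_gt (lt_of_lt_of_le hζ0 hw.1)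
      field_simp
    have step3 : (∫ w, hExp τ w.1 * w.2 j * w.2 k ∂μW)
        = ∫ ω, hExp τ (ε ω) * X ω j * X ω k ∂μ := by
      rw [hμWdef, integral_map hWm.aemeasurable]
      exact ((((hExp_measurable τ).comp measurable_fst).mul
        ((measurable_pi_apply j).comp measurable_snd)).mul
        ((measurable_pi_apply k).comp measurable_snd)).aestronglyMeasurable
    rw [step1, step2, step3]
  rw [key]
  -- split by independence of ε and X
  have hmul2 : Measurable (fun x : Fin p → ℝ => x j * x k) :=
    (measurable_pi_apply j).mul (measurable_pi_apply k)
  have hInd2 : IndepFun (fun ω => hExp τ (ε ω)) (fun ω => X ω j * X ω k) μ :=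
    hIndεX.comp (hExp_measurable τ) hmul2
  have := hInd2.integral_mul_eq_mul_integral
    ((hExp_measurable τ).comp hεm).aestronglyMeasurable
    ((hmul2.comp hXm)).aestronglyMeasurable
  calc (∫ ω, hExp τ (ε ω) * X ω j * X ω k ∂μ)
      = ∫ ω, ((fun ω => hExp τ (ε ω)) * fun ω => X ω j * X ω k) ω ∂μ := by
        simp [mul_assoc]
    _ = (∫ ω, hExp τ (ε ω) ∂μ) * ∫ ω, X ω j * X ω k ∂μ := this
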